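/- For any B ∈ M_n(ℂ) and any 1 ≤ m ≤ n, the m-numerical range {∑_{i=1}^m ⟨u_i, Bu_i⟩ : u_1,...,u_m orthonormal in ℂ^n} is a convex subset of ℂ. -/

import Mathlib

open Matrix BigOperators Finset
open scoped ComplexOrder
noncomputable section
namespace NR
variable {n m : ℕ}

def sfM (M : Matrix (Fin n) (Fin n) ℂ) (x y : Fin n → ℂ) : ℂ := star x ⬝ᵥ (M *ᵥ y)

lemma sfM_conj (M : Matrix (Fin n) (Fin n) ℂ) (x y : Fin n → ℂ) :
    sfM Mᴴ y x = (starRingEnd ℂ) (sfM M x y) := by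
  simp only [sfM, dotProduct, Matrix.mulVec, Matrix.conjTranspose_apply, Pi.star_apply,
    map_sum, _root_.map_mul, Complex.conj_conj, Finset.mul_sum, RCLike.star_def]
  rw [Finset.sum_comm]
  exact Finset.sum_congr rfl fun i _ => Finset.sum_congr rfl fun j _ => by ring

lemma ip_conj (x y : Fin n → ℂ) : sfM (1 : Matrix (Fin n) (Fin n) ℂ) y x
    = (starRingEnd ℂ) (sfM 1 x y) := by
  have := sfM_conj (1 : Matrix (Fin n) (Fin n) ℂ) x y
  simpa using this

lemma sfM_comb (M : Matrix (Fin n) (Fin n) ℂ) (α β γ δ : ℂ) (x y z w : Fin n → ℂ) :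
    sfM M (α•x + β•y) (γ•z + δ•w) = (starRingEnd ℂ) α * γ * sfM M x z
      + (starRingEnd ℂ) α * δ * sfM M x w + (starRingEnd ℂ) β * γ * sfM M y z
      + (starRingEnd ℂ) β * δ * sfM M y w := by
  simp only [sfM, star_add, star_smul, Matrix.mulVec_add, Matrix.mulVec_smul,
    add_dotProduct, dotProduct_add, smul_dotProduct,
    dotProduct_smul, smul_eq_mul, RCLike.star_def]
  ring

lemma sfM_smul (M : Matrix (Fin n) (Fin n) ℂ) (ρ σ : ℂ) (x y : Fin n → ℂ) :
    sfM M (ρ•x) (σ•y) = (starRingEnd ℂ) ρ * σ * sfM M x y := by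
  simp only [sfM, star_smul, Matrix.mulVec_smul, smul_dotProduct,
    dotProduct_smul, smul_eq_mul, RCLike.star_def]
  ring

lemma ip_self_pos {x : Fin n → ℂ} (hx : x ≠ 0) : 0 < sfM 1 x x := by
  rw [sfM, Matrix.one_mulVec]
  exact Matrix.dotProduct_star_self_pos_iff.mpr hx

lemma exists_unit_mul_real (d : ℂ) :
    ∃ ζ : ℂ, ‖ζ‖ = 1 ∧ ζ * d = (‖d‖ : ℂ) := by
  have aux : ∀ r θ : ℝ, Complex.exp (↑(-θ) * Complex.I) * (↑r * Complex.exp (↑θ * Complex.I))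
      = (r : ℂ) := by
    intro r θ
    rw [mul_comm, mul_assoc, ← Complex.exp_add]
    have h0 : (↑θ * Complex.I + ↑(-θ) * Complex.I) = 0 := by push_cast; ring
    rw [h0, Complex.exp_zero, mul_one]
  refine ⟨Complex.exp (↑(-Complex.arg d) * Complex.I), ?_, ?_⟩
  · exact Complex.norm_exp_ofReal_mul_I (-Complex.arg d)
  · calc Complex.exp (↑(-Complex.arg d) * Complex.I) * d
        = Complex.exp (↑(-Complex.arg d) * Complex.I)
          * (↑‖d‖ * Complex.exp (↑(Complex.arg d) * Complex.I)) := by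
          rw [Complex.norm_mul_exp_arg_mul_I d]
      _ = _ := aux _ _

/-- The two-dimensional convexity step. -/
lemma L1 (B : Matrix (Fin n) (Fin n) ℂ) {u v : Fin n → ℂ}
    (hu : sfM 1 u u = 1) (hv : sfM 1 v v = 1) {t : ℝ} (ht0 : 0 ≤ t) (ht1 : t ≤ 1) :
    ∃ α β : ℂ, sfM 1 (α•u+β•v) (α•u+β•v) = 1 ∧
      sfM B (α•u+β•v) (α•u+β•v) = t * sfM B u u + (1-t) * sfM B v v := by
  set a := sfM B u u with ha
  set b := sfM B v v with hb
  by_cases hab : a = b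
  · refine ⟨1, 0, ?_, ?_⟩
    · rw [sfM_comb]; simp [hu]
    · rw [sfM_comb]; simp [← ha, hab]; ring
  · have habne : a - b ≠ 0 := sub_ne_zero.mpr hab
    set c := sfM 1 u v with hc
    obtain ⟨mm, hmmeq⟩ : ∃ mm : ℂ, mm * (a - b) = sfM B u v - b * c :=
      ⟨_, div_mul_cancel₀ _ habne⟩
    obtain ⟨mm', hmmeq'⟩ : ∃ mm' : ℂ, mm' * (a - b) = sfM B v u - b * (starRingEnd ℂ) c :=
      ⟨_, div_mul_cancel₀ _ habne⟩
    obtain ⟨ζ, hζabs, hζd⟩ := exists_unit_mul_real (mm - (starRingEnd ℂ) mm')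
    have hζ1 : (starRingEnd ℂ) ζ * ζ = 1 := by
      rw [mul_comm, Complex.mul_conj, Complex.normSq_eq_norm_sq, hζabs]; norm_num
    have hζne : ζ ≠ 0 := by
      intro h0; rw [h0] at hζabs; simp at hζabs
    set Rre : ℝ := ‖mm - (starRingEnd ℂ) mm'‖ + 2 * (ζ * (starRingEnd ℂ) mm').re
      with hRre
    have hRc : (Rre : ℂ) = ζ * mm + (starRingEnd ℂ) ζ * mm' := by
      have e1 : ζ * mm + (starRingEnd ℂ) ζ * mm'
          = ζ * (mm - (starRingEnd ℂ) mm')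
            + (ζ * (starRingEnd ℂ) mm' + (starRingEnd ℂ) (ζ * (starRingEnd ℂ) mm')) := by
        simp only [_root_.map_mul, Complex.conj_conj]; ring
      rw [e1, hζd, Complex.add_conj]
      push_cast [hRre]; ring
    have hadd : ζ * c + (starRingEnd ℂ) ζ * (starRingEnd ℂ) c = 2 * ((ζ * c).re : ℂ) := by
      have h2 := Complex.add_conj (ζ * c)
      rw [_root_.map_mul] at h2
      rw [h2]; push_cast; ring
    set N : ℝ → ℝ := fun s => s^2 + (1-s)^2 + 2*s*(1-s)*(ζ*c).re with hN
    set w : ℝ → (Fin n → ℂ) := fun s => (s : ℂ) • u + ((1-(s:ℂ)) * ζ) • v with hw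
    have hvu : sfM 1 v u = (starRingEnd ℂ) c := by rw [hc, ← ip_conj]
    have hipw : ∀ s : ℝ, sfM 1 (w s) (w s) = (N s : ℂ) := by
      intro s
      rw [hw]
      simp only
      rw [sfM_comb, hu, hv, hvu, ← hc]
      simp only [_root_.map_mul, Complex.conj_ofReal, map_sub, _root_.map_one]
      push_cast [hN]
      linear_combination (↑s*(1-(s:ℂ))) * hadd + (1-(s:ℂ))^2 * hζ1
    have hwne : ∀ s : ℝ, w s ≠ 0 := by
      intro s hws
      rcases eq_or_ne s 0 with h0 | h0
      · rw [hw] at hws; simp only [h0] at hws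
        push_cast at hws
        simp only [Complex.ofReal_zero, zero_smul, zero_add, sub_zero, one_mul] at hws
        have hv0 : v = 0 := by
          have := congrArg (fun x => ζ⁻¹ • x) hws
          simpa [smul_smul, inv_mul_cancel₀ hζne] using this
        rw [hv0] at hv
        simp [sfM] at hv
      · have hsne : (s:ℂ) ≠ 0 := Complex.ofReal_ne_zero.mpr h0
        rw [hw] at hws; simp only at hws
        have hus : u = (-( (1-(s:ℂ))*ζ) / (s:ℂ)) • v := by
          have h1 : (s:ℂ) • u = -(((1-(s:ℂ))*ζ) • v) := by
            rw [← sub_eq_zero]; rw [sub_neg_eq_add]; exact hws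
          have := congrArg (fun x => ((s:ℂ)⁻¹) • x) h1
          simp only [smul_smul, inv_mul_cancel₀ hsne, one_smul, smul_neg] at this
          rw [this, ← neg_smul]
          congr 1
          field_simp
        set μ := (-( (1-(s:ℂ))*ζ) / (s:ℂ)) with hμ
        have hμ1 : (starRingEnd ℂ) μ * μ = 1 := by
          have := hu
          rw [hus, sfM_smul, hv, mul_one] at this
          exact this
        have : a = b := by
          rw [ha, hb, hus, sfM_smul, hμ1, one_mul]
        exact hab this
    have hNpos : ∀ s : ℝ, 0 < N s := by
      intro s
      have h1 : (0:ℂ) < sfM 1 (w s) (w s) := ip_self_pos (hwne s)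
      rw [hipw s] at h1
      exact_mod_cast h1
    have hq : ∀ s : ℝ, sfM B (w s) (w s)
        = (N s : ℂ) * b + (a - b) * ((s^2 + s*(1-s)*Rre : ℝ) : ℂ) := by
      intro s
      rw [hw]
      simp only
      rw [sfM_comb, ← ha, ← hb]
      simp only [_root_.map_mul, Complex.conj_ofReal, map_sub, _root_.map_one]
      push_cast [hN]
      linear_combination (-(↑s*(1-(s:ℂ))*ζ)) * hmmeq - (↑s*(1-(s:ℂ))*(starRingEnd ℂ) ζ) * hmmeq'
        - (↑s*(1-(s:ℂ))*(a-b)) * hRc + (↑s*(1-(s:ℂ))*b) * hadd + ((1-(s:ℂ))^2*b) * hζ1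
    set g : ℝ → ℝ := fun s => (s^2 + s*(1-s)*Rre)/(N s) with hg
    have hcont : ContinuousOn g (Set.Icc 0 1) := by
      apply ContinuousOn.div
      · fun_prop
      · fun_prop
      · intro s _; exact (hNpos s).ne'
    have hg0 : g 0 = 0 := by simp [hg]
    have hg1 : g 1 = 1 := by
      simp only [hg, hN]
      norm_num
    have htmem : t ∈ Set.Icc (g 0) (g 1) := by rw [hg0, hg1]; exact ⟨ht0, ht1⟩
    obtain ⟨s₀, hs₀mem, hs₀⟩ := intermediate_value_Icc (by norm_num : (0:ℝ) ≤ 1) hcont htmem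
    have hNs := hNpos s₀
    have hkey : (s₀^2 + s₀*(1-s₀)*Rre : ℝ) = t * N s₀ := by
      rw [hg] at hs₀
      field_simp at hs₀
      linarith [hs₀]
    set r := Real.sqrt (N s₀) with hr
    have hrpos : 0 < r := Real.sqrt_pos.mpr hNs
    have hr2 : r^2 = N s₀ := Real.sq_sqrt hNs.le
    have hNr : ((N s₀ : ℝ) : ℂ) = ((r:ℝ):ℂ)*((r:ℝ):ℂ) := by
      rw [← Complex.ofReal_mul]
      norm_cast
      rw [← hr2]; ring
    have hkeyc : ((s₀^2 + s₀*(1-s₀)*Rre : ℝ) : ℂ) = (t:ℂ) * ((N s₀:ℝ):ℂ) := by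
      rw [← Complex.ofReal_mul]
      exact_mod_cast congrArg Complex.ofReal hkey
    have hrinv : ((r⁻¹:ℝ):ℂ) = (((r:ℝ):ℂ))⁻¹ := Complex.ofReal_inv r
    have hrne : ((r:ℝ):ℂ) ≠ 0 := Complex.ofReal_ne_zero.mpr hrpos.ne'
    have hvec : ((((r:ℝ)⁻¹:ℝ):ℂ) * (s₀:ℂ)) • u + ((((r:ℝ)⁻¹:ℝ):ℂ) * ((1-(s₀:ℂ))*ζ)) • v
        = (((r:ℝ)⁻¹:ℝ):ℂ) • w s₀ := by
      rw [hw]; simp only [smul_add, smul_smul]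
    refine ⟨((r⁻¹ : ℝ) : ℂ) * (s₀:ℂ), ((r⁻¹:ℝ):ℂ) * ((1-(s₀:ℂ))*ζ), ?_, ?_⟩
    · rw [hvec, sfM_smul, hipw s₀, Complex.conj_ofReal, hNr, hrinv]
      field_simp
    · rw [hvec, sfM_smul, hq s₀, hkeyc, hNr, Complex.conj_ofReal, hrinv]
      field_simp
      ring

lemma dotProduct_sum' (x : Fin n → ℂ) (f : Fin m → Fin n → ℂ) :
    x ⬝ᵥ (∑ i, f i) = ∑ i, x ⬝ᵥ f i := by
  simp [dotProduct, Finset.sum_apply, Finset.mul_sum]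
  exact Finset.sum_comm

lemma sum_dotProduct' (x : Fin n → ℂ) (f : Fin m → Fin n → ℂ) :
    (∑ i, f i) ⬝ᵥ x = ∑ i, f i ⬝ᵥ x := by
  simp [dotProduct, Finset.sum_apply, Finset.sum_mul]
  exact Finset.sum_comm

lemma mulVec_sum' (M : Matrix (Fin n) (Fin n) ℂ) (f : Fin m → Fin n → ℂ) :
    M *ᵥ (∑ i, f i) = ∑ i, M *ᵥ f i := by
  simp only [← Matrix.mulVecLin_apply]
  exact map_sum M.mulVecLin f Finset.univ

lemma sfM_sum_sum (M : Matrix (Fin n) (Fin n) ℂ) (c d : Fin m → ℂ) (u v : Fin m → Fin n → ℂ) :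
    sfM M (∑ i, c i • u i) (∑ i, d i • v i)
      = ∑ i, ∑ j, (starRingEnd ℂ) (c i) * d j * sfM M (u i) (v j) := by
  simp only [sfM, star_sum, star_smul, mulVec_sum', Matrix.mulVec_smul,
    sum_dotProduct', dotProduct_sum', smul_dotProduct,
    dotProduct_smul, smul_eq_mul, RCLike.star_def, Finset.mul_sum]
  rw [Finset.sum_comm]
  refine Finset.sum_congr rfl fun i _ => Finset.sum_congr rfl fun j _ => by ring

lemma mix_on {W : Matrix (Fin m) (Fin m) ℂ} (hW : star W * W = 1)
    {u : Fin m → Fin n → ℂ} (hu : ∀ i j, sfM 1 (u i) (u j) = if i = j then 1 else 0) :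
    ∀ j k, sfM (1 : Matrix (Fin n) (Fin n) ℂ) (∑ i, W i j • u i) (∑ i, W i k • u i)
      = if j = k then 1 else 0 := by
  intro j k
  rw [sfM_sum_sum]
  have h : (star W * W) j k = (1 : Matrix (Fin m) (Fin m) ℂ) j k := by rw [hW]
  rw [Matrix.mul_apply] at h
  simp only [Matrix.star_apply, RCLike.star_def, Matrix.one_apply] at h
  rw [← h]
  refine Finset.sum_congr rfl fun i _ => ?_
  rw [Finset.sum_eq_single i]
  · rw [hu]; simp
  · intro i' _ hne; rw [hu]; simp [Ne.symm hne, hne]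
  · simp

lemma mix_sum (B : Matrix (Fin n) (Fin n) ℂ) {W : Matrix (Fin m) (Fin m) ℂ}
    (hW : W * star W = 1) (u : Fin m → Fin n → ℂ) :
    ∑ j, sfM B (∑ i, W i j • u i) (∑ i, W i j • u i) = ∑ i, sfM B (u i) (u i) := by
  have key : ∀ i i', (∑ j, (starRingEnd ℂ) (W i j) * W i' j) = if i' = i then 1 else 0 := by
    intro i i'
    have h : (W * star W) i' i = (1 : Matrix (Fin m) (Fin m) ℂ) i' i := by rw [hW]
    rw [Matrix.mul_apply] at h
    simp only [Matrix.star_apply, RCLike.star_def, Matrix.one_apply] at h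
    rw [← h]
    exact Finset.sum_congr rfl fun j _ => by ring
  calc ∑ j, sfM B (∑ i, W i j • u i) (∑ i, W i j • u i)
      = ∑ j, ∑ i, ∑ i', (starRingEnd ℂ) (W i j) * W i' j * sfM B (u i) (u i') := by
        exact Finset.sum_congr rfl fun j _ => sfM_sum_sum B _ _ u u
    _ = ∑ i, ∑ i', (∑ j, (starRingEnd ℂ) (W i j) * W i' j) * sfM B (u i) (u i') := by
        rw [Finset.sum_comm]
        refine Finset.sum_congr rfl fun i _ => ?_
        rw [Finset.sum_comm]
        exact Finset.sum_congr rfl fun i' _ => (Finset.sum_mul _ _ _).symm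
    _ = ∑ i, sfM B (u i) (u i) := by
        refine Finset.sum_congr rfl fun i _ => ?_
        rw [Finset.sum_eq_single i]
        · rw [key]; simp
        · intro i' _ hne; rw [key]; simp [hne]
        · simp

lemma L2 (B : Matrix (Fin n) (Fin n) ℂ) {u v : Fin m → Fin n → ℂ}
    (hu : ∀ i j, sfM 1 (u i) (u j) = if i = j then 1 else 0)
    (hv : ∀ i j, sfM 1 (v i) (v j) = if i = j then 1 else 0) :
    ∃ u' v' : Fin m → Fin n → ℂ,
      (∀ i j, sfM 1 (u' i) (u' j) = if i = j then 1 else 0) ∧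
      (∀ i j, sfM 1 (v' i) (v' j) = if i = j then 1 else 0) ∧
      (∀ i j, i ≠ j → sfM 1 (u' i) (v' j) = 0) ∧
      ∑ i, sfM B (u' i) (u' i) = ∑ i, sfM B (u i) (u i) ∧
      ∑ i, sfM B (v' i) (v' i) = ∑ i, sfM B (v i) (v i) := by
  classical
  set C : Matrix (Fin m) (Fin m) ℂ := Matrix.of (fun i j => sfM 1 (u i) (v j)) with hC
  have hherm : (Cᴴ * C).IsHermitian := Matrix.isHermitian_conjTranspose_mul_self C
  set X : Matrix (Fin m) (Fin m) ℂ := (Matrix.IsHermitian.eigenvectorUnitary hherm : Matrix (Fin m) (Fin m) ℂ) with hX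
  have hXU : X ∈ Matrix.unitaryGroup (Fin m) ℂ := (Matrix.IsHermitian.eigenvectorUnitary hherm).2
  have hXsX : star X * X = 1 := Matrix.UnitaryGroup.star_mul_self ⟨X, hXU⟩
  have hXXs : X * star X = 1 := mul_eq_one_comm.mp hXsX
  set D := Matrix.IsHermitian.eigenvalues hherm with hD
  have hDnn : ∀ i, 0 ≤ D i :=
    fun i => (Matrix.posSemidef_conjTranspose_mul_self C).eigenvalues_nonneg i
  have hspec : Cᴴ * C = X * Matrix.diagonal (fun i => (D i : ℂ)) * Xᴴ := by
    have := Matrix.IsHermitian.spectral_theorem hherm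
    rw [this]
    rfl
  set Y := C * X with hY
  have hYY : Yᴴ * Y = Matrix.diagonal (fun i => (D i : ℂ)) := by
    rw [hY, Matrix.conjTranspose_mul]
    calc Xᴴ * Cᴴ * (C * X) = Xᴴ * (Cᴴ * C) * X := by
          rw [Matrix.mul_assoc, Matrix.mul_assoc, Matrix.mul_assoc]
      _ = Xᴴ * X * Matrix.diagonal (fun i => (D i : ℂ)) * (Xᴴ * X) := by
          rw [hspec]
          simp only [Matrix.mul_assoc]
      _ = Matrix.diagonal (fun i => (D i : ℂ)) := by
          rw [← Matrix.star_eq_conjTranspose, hXsX]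
          simp
  set coly : Fin m → EuclideanSpace ℂ (Fin m) := fun k => WithLp.toLp 2 (fun i => Y i k) with hcoly
  have hinner : ∀ j k, inner ℂ (coly j) (coly k) = (Yᴴ * Y) j k := by
    intro j k
    rw [Matrix.mul_apply]
    simp [PiLp.inner_apply, RCLike.inner_apply, Matrix.conjTranspose_apply, hcoly,
      RCLike.star_def]
    exact Finset.sum_congr rfl fun i _ => mul_comm _ _
  set S : Set (Fin m) := {k | D k ≠ 0} with hS
  set wS : Fin m → EuclideanSpace ℂ (Fin m) :=
    fun k => (((Real.sqrt (D k))⁻¹ : ℝ) : ℂ) • coly k with hwS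
  have hWSorth : Orthonormal ℂ (S.restrict wS) := by
    rw [orthonormal_iff_ite]
    rintro ⟨j, hj⟩ ⟨k, hk⟩
    simp only [Set.restrict_apply, Set.restrict, hwS]
    rw [inner_smul_left, inner_smul_right, hinner, hYY]
    rw [Complex.conj_ofReal]
    by_cases hjk : j = k
    · subst hjk
      simp only [Matrix.diagonal_apply_eq, Subtype.mk_eq_mk, if_pos rfl]
      have hDk : 0 < D j := lt_of_le_of_ne (hDnn j) (Ne.symm hj)
      have hs : Real.sqrt (D j) ≠ 0 := (Real.sqrt_pos.mpr hDk).ne'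
      have hval : ((Real.sqrt (D j))⁻¹ * ((Real.sqrt (D j))⁻¹ * D j) : ℝ) = 1 := by
        rw [← mul_assoc, ← mul_inv, Real.mul_self_sqrt (hDnn j), inv_mul_cancel₀ hDk.ne']
      simp only [if_true]
      push_cast
      have hsc : ((Real.sqrt (D j) : ℝ) : ℂ) ≠ 0 := Complex.ofReal_ne_zero.mpr hs
      field_simp
      exact_mod_cast (Real.sq_sqrt (hDnn j)).symm
    · rw [Matrix.diagonal_apply_ne _ hjk]
      simp [Subtype.mk_eq_mk, hjk]
  obtain ⟨bb, hbb⟩ := hWSorth.exists_orthonormalBasis_extension_of_card_eq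
    (by simp)
  have hbborth := orthonormal_iff_ite.mp bb.orthonormal
  set W : Matrix (Fin m) (Fin m) ℂ := Matrix.of (fun i j => bb j i) with hW
  have hWsW : star W * W = 1 := by
    ext j k
    rw [Matrix.mul_apply, Matrix.one_apply]
    have := hbborth j k
    rw [PiLp.inner_apply] at this
    simp only [RCLike.inner_apply, RCLike.star_def] at this
    rw [← this]
    refine Finset.sum_congr rfl fun i _ => ?_
    simp [hW, Matrix.star_apply, RCLike.star_def]
    ring
  have hWWs : W * star W = 1 := mul_eq_one_comm.mp hWsW
  refine ⟨fun j => ∑ i, W i j • u i, fun k => ∑ i, X i k • v i,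
    mix_on hWsW hu, mix_on hXsX hv, ?_, mix_sum B hWWs u, mix_sum B hXXs v⟩
  intro j k hjk
  rw [sfM_sum_sum]
  have h1 : ∑ i, ∑ i', (starRingEnd ℂ) (W i j) * X i' k * sfM 1 (u i) (v i')
      = inner ℂ (bb j) (coly k) := by
    rw [PiLp.inner_apply]
    simp only [RCLike.inner_apply, RCLike.star_def]
    refine Finset.sum_congr rfl fun i _ => ?_
    rw [hcoly]
    simp only [hY, Matrix.mul_apply, Finset.mul_sum, Finset.sum_mul]
    refine Finset.sum_congr rfl fun i' _ => ?_
    simp only [hW, hC, Matrix.of_apply]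
    ring
  rw [h1]
  by_cases hk : D k = 0
  · have hcol0 : coly k = 0 := by
      have h2 : inner ℂ (coly k) (coly k) = (0:ℂ) := by
        rw [hinner, hYY]
        simp [Matrix.diagonal_apply_eq, hk]
      exact inner_self_eq_zero.mp h2
    rw [hcol0, inner_zero_right]
  · have hkS : k ∈ S := hk
    have hDk : 0 < D k := lt_of_le_of_ne (hDnn k) (Ne.symm hk)
    have hs : Real.sqrt (D k) ≠ 0 := (Real.sqrt_pos.mpr hDk).ne'
    have hcolk : coly k = ((Real.sqrt (D k) : ℝ) : ℂ) • wS k := by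
      rw [hwS, smul_smul, ← Complex.ofReal_mul, mul_inv_cancel₀ hs]
      simp
    rw [hcolk, inner_smul_right, ← hbb k hkS, hbborth j k]
    simp [hjk]

end NR
end

noncomputable def svalues {m p : ℕ} (A : Matrix (Fin m) (Fin p) ℂ) : Fin p → ℝ :=
  fun i => Real.sqrt
    (((Matrix.isHermitian_conjTranspose_mul_self A).eigenvalues ∘
      Tuple.sort (Matrix.isHermitian_conjTranspose_mul_self A).eigenvalues) i.rev)

noncomputable def kyFan {n : ℕ} (k : ℕ) (A : Matrix (Fin n) (Fin n) ℂ) : ℝ :=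
  ∑ i ∈ Finset.univ.filter (fun i : Fin n => (i : ℕ) < k), svalues A i

def ONSys {n k : ℕ} (u : Fin k → Fin n → ℂ) : Prop :=
  ∀ i j, star (u i) ⬝ᵥ u j = if i = j then 1 else 0

noncomputable def eigDesc {n : ℕ} (A : Matrix (Fin n) (Fin n) ℂ) (hA : A.IsHermitian) :
    Fin n → ℝ :=
  (hA.eigenvalues ∘ Tuple.sort hA.eigenvalues) ∘ Fin.rev

theorem stmt13 {n m : ℕ} (hm1 : 1 ≤ m) (hm : m ≤ n) (B : Matrix (Fin n) (Fin n) ℂ) :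
    Convex ℝ {z : ℂ | ∃ u : Fin m → Fin n → ℂ, ONSys u ∧
        z = ∑ i, star (u i) ⬝ᵥ (B *ᵥ u i)} := by
  intro z₁ hz₁ z₂ hz₂ p q hp hq hpq
  obtain ⟨u, huON, hz1eq⟩ := hz₁
  obtain ⟨v, hvON, hz2eq⟩ := hz₂
  have hu : ∀ i j, NR.sfM 1 (u i) (u j) = if i = j then 1 else 0 := by
    intro i j; rw [NR.sfM, Matrix.one_mulVec]; exact huON i j
  have hv : ∀ i j, NR.sfM 1 (v i) (v j) = if i = j then 1 else 0 := by
    intro i j; rw [NR.sfM, Matrix.one_mulVec]; exact hvON i j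
  obtain ⟨u', v', hu', hv', hcross, hsumu, hsumv⟩ := NR.L2 B hu hv
  have hp1 : p ≤ 1 := by linarith
  have hchoice := fun i : Fin m => NR.L1 B (u := u' i) (v := v' i)
    (by simpa using hu' i i)
    (by simpa using hv' i i) hp hp1
  choose α β h using hchoice
  set w : Fin m → Fin n → ℂ := fun i => α i • u' i + β i • v' i with hwdef
  have hsfw : ∀ i j, star (w i) ⬝ᵥ (w j) = NR.sfM 1 (w i) (w j) := by
    intro i j; rw [NR.sfM, Matrix.one_mulVec]
  refine ⟨w, ?_, ?_⟩
  · intro i j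
    rw [hsfw]
    by_cases hij : i = j
    · subst hij
      simp only [if_pos rfl]
      exact (h i).1
    · simp only [if_neg hij]
      rw [hwdef]
      simp only
      rw [NR.sfM_comb]
      have h1 : NR.sfM 1 (u' i) (u' j) = 0 := by rw [hu', if_neg hij]
      have h2 : NR.sfM 1 (u' i) (v' j) = 0 := hcross i j hij
      have h3 : NR.sfM 1 (v' i) (u' j) = 0 := by
        rw [NR.ip_conj, hcross j i (Ne.symm hij), map_zero]
      have h4 : NR.sfM 1 (v' i) (v' j) = 0 := by rw [hv', if_neg hij]
      rw [h1, h2, h3, h4]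
      ring
  · have hqe : (q : ℂ) = 1 - (p : ℂ) := by
      have : q = 1 - p := by linarith
      rw [this]; push_cast; ring
    have hsum : ∀ i, NR.sfM B (w i) (w i)
        = (p:ℂ) * NR.sfM B (u' i) (u' i) + (1-(p:ℂ)) * NR.sfM B (v' i) (v' i) :=
      fun i => (h i).2
    have hz1' : z₁ = ∑ i, NR.sfM B (u i) (u i) := hz1eq
    have hz2' : z₂ = ∑ i, NR.sfM B (v i) (v i) := hz2eq
    calc p • z₁ + q • z₂ = (p:ℂ) * z₁ + (q:ℂ) * z₂ := by
          rw [Complex.real_smul, Complex.real_smul]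
      _ = (p:ℂ) * (∑ i, NR.sfM B (u' i) (u' i))
            + (1-(p:ℂ)) * (∑ i, NR.sfM B (v' i) (v' i)) := by
          rw [hz1', hz2', hsumu, hsumv, hqe]
      _ = ∑ i, NR.sfM B (w i) (w i) := by
          rw [Finset.mul_sum, Finset.mul_sum, ← Finset.sum_add_distrib]
          exact (Finset.sum_congr rfl fun i _ => (hsum i).symm)
      _ = ∑ i, star (w i) ⬝ᵥ (B *ᵥ w i) := rfl
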